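/- If λ₂ = 0, then the minimum of Δ_λ(f) over all f ∈ 𝓛(P_{X|S=0}) equals −λ₄·ρ_m·√(Var[log(P_{Y|S=0}(Y)/P_{Y|S=1}(Y)) | S=0]), where Var[·|S=0] denotes the variance under the conditional distribution given S=0. -/

import Mathlib

open Filter Topology

/-- Kullback–Leibler divergence between distributions on a finite set. -/
noncomputable def KLdiv {α : Type*} [Fintype α] (P Q : α → ℝ) : ℝ :=
  ∑ a, P a * Real.log (P a / Q a)

/-- The objective `L_λ` evaluated at the perturbed distribution
`P̃_{X|S=0}(x) = P0(x)(1+εf(x))`, with `P̃_{Y|S=0} = W ∘ P̃_{X|S=0}`.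
At `ε = 0` this is `L_λ(P_{X|S=0})`. -/
noncomputable def Lobj {𝒳 : Type*} [Fintype 𝒳]
    (P0 P1 : 𝒳 → ℝ) (W : 𝒳 → Bool → ℝ) (Q0 Q1 : Bool → ℝ)
    (l1 l2 l3 l4 : ℝ) (f : 𝒳 → ℝ) (ε : ℝ) : ℝ :=
  l1 * KLdiv (fun x => P0 x * (1 + ε * f x)) P0
    + l2 * KLdiv (fun x => P0 x * (1 + ε * f x)) P1
    + l3 * KLdiv (fun y => ∑ x, P0 x * (1 + ε * f x) * W x y) Q0
    + l4 * KLdiv (fun y => ∑ x, P0 x * (1 + ε * f x) * W x y) Q1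

lemma atomDeriv (a b c : ℝ) (ha : 0 < a) (hc : 0 < c) :
    HasDerivAt (fun ε : ℝ => (a + ε * b) * Real.log ((a + ε * b) / c))
      (b * Real.log (a / c) + b) 0 := by
  have hu : HasDerivAt (fun ε : ℝ => a + ε * b) b 0 := by
    simpa using ((hasDerivAt_id (0 : ℝ)).mul_const b).const_add a
  have hne : (a + (0 : ℝ) * b) / c ≠ 0 := by
    simp only [zero_mul, add_zero]
    positivity
  have hlog : HasDerivAt (fun ε : ℝ => Real.log ((a + ε * b) / c))
      ((b / c) / ((a + 0 * b) / c)) 0 := (hu.div_const c).log hne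
  have h := hu.fun_mul hlog
  refine h.congr_deriv ?_
  rw [zero_mul, add_zero]
  field_simp

lemma derivLobj {𝒳 : Type*} [Fintype 𝒳]
    (P0 P1 : 𝒳 → ℝ) (W : 𝒳 → Bool → ℝ) (Q0 Q1 : Bool → ℝ)
    (hP0pos : ∀ x, 0 < P0 x)
    (hQ0 : ∀ y, Q0 y = ∑ x, P0 x * W x y)
    (hQ0pos : ∀ y, 0 < Q0 y) (hQ1pos : ∀ y, 0 < Q1 y)
    (l1 l3 l4 : ℝ) (f : 𝒳 → ℝ) :
    HasDerivAt (fun ε => Lobj P0 P1 W Q0 Q1 l1 0 l3 l4 f ε)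
      (l1 * (∑ x, (P0 x * f x * Real.log (P0 x / P0 x) + P0 x * f x))
        + (l3 * (∑ y, ((∑ x, P0 x * f x * W x y) * Real.log (Q0 y / Q0 y)
              + (∑ x, P0 x * f x * W x y)))
          + l4 * (∑ y, ((∑ x, P0 x * f x * W x y) * Real.log (Q0 y / Q1 y)
              + (∑ x, P0 x * f x * W x y))))) 0 := by
  have hfun : (fun ε => Lobj P0 P1 W Q0 Q1 l1 0 l3 l4 f ε)
      = fun ε =>
        l1 * (∑ x, (P0 x + ε * (P0 x * f x)) * Real.log ((P0 x + ε * (P0 x * f x)) / P0 x))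
        + (l3 * (∑ y, (Q0 y + ε * (∑ x, P0 x * f x * W x y))
              * Real.log ((Q0 y + ε * (∑ x, P0 x * f x * W x y)) / Q0 y))
          + l4 * (∑ y, (Q0 y + ε * (∑ x, P0 x * f x * W x y))
              * Real.log ((Q0 y + ε * (∑ x, P0 x * f x * W x y)) / Q1 y))) := by
    funext ε
    have e1 : ∀ x, P0 x * (1 + ε * f x) = P0 x + ε * (P0 x * f x) := fun x => by ring
    have e2 : ∀ y, (∑ x, (P0 x + ε * (P0 x * f x)) * W x y)
        = Q0 y + ε * (∑ x, P0 x * f x * W x y) := by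
      intro y
      rw [hQ0, Finset.mul_sum, ← Finset.sum_add_distrib]
      exact Finset.sum_congr rfl fun x _ => by ring
    simp only [Lobj, KLdiv, zero_mul, add_zero]
    simp only [e1]
    simp only [e2]
    ring
  rw [hfun]
  have hA : HasDerivAt
      (fun ε : ℝ => ∑ x, (P0 x + ε * (P0 x * f x)) * Real.log ((P0 x + ε * (P0 x * f x)) / P0 x))
      (∑ x, (P0 x * f x * Real.log (P0 x / P0 x) + P0 x * f x)) 0 :=
    HasDerivAt.fun_sum fun x _ => atomDeriv (P0 x) (P0 x * f x) (P0 x) (hP0pos x) (hP0pos x)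
  have hC : HasDerivAt
      (fun ε : ℝ => ∑ y, (Q0 y + ε * (∑ x, P0 x * f x * W x y))
        * Real.log ((Q0 y + ε * (∑ x, P0 x * f x * W x y)) / Q0 y))
      (∑ y, ((∑ x, P0 x * f x * W x y) * Real.log (Q0 y / Q0 y)
        + (∑ x, P0 x * f x * W x y))) 0 :=
    HasDerivAt.fun_sum fun y _ => atomDeriv (Q0 y) _ (Q0 y) (hQ0pos y) (hQ0pos y)
  have hD : HasDerivAt
      (fun ε : ℝ => ∑ y, (Q0 y + ε * (∑ x, P0 x * f x * W x y))
        * Real.log ((Q0 y + ε * (∑ x, P0 x * f x * W x y)) / Q1 y))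
      (∑ y, ((∑ x, P0 x * f x * W x y) * Real.log (Q0 y / Q1 y)
        + (∑ x, P0 x * f x * W x y))) 0 :=
    HasDerivAt.fun_sum fun y _ => atomDeriv (Q0 y) _ (Q1 y) (hQ0pos y) (hQ1pos y)
  exact (hA.const_mul l1).add ((hC.const_mul l3).add (hD.const_mul l4))

/-- Corollary 2 of the paper: if `λ₂ = 0`, then the minimum of
`Δ_λ(f) = lim_{ε→0⁺}(L_λ(P̃_{X|S=0}) − L_λ(P_{X|S=0}))/ε` over all `f ∈ 𝓛(P_{X|S=0})`
equals `−λ₄·ρ_m·√(Var[log(P_{Y|S=0}(Y)/P_{Y|S=1}(Y))|S=0])`, stated as: this value is the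
least element of the set of achieved limit values `Δ_λ(f)`, `f ∈ 𝓛(P_{X|S=0})`.
Here the variance under `P_{Y|S=0} = Q0` is
`Var[ℓ(Y)|S=0] = ∑ y, Q0(y)·(ℓ(y) − ∑ y', Q0(y')·ℓ(y'))²` with `ℓ(y) = log(Q0(y)/Q1(y))`.
Setup (`𝒴 = Bool`, channel `W`, `P0/P1/Q0/Q1` full support, `g_m`, `ρ_m`) as in the paper. -/
theorem stmt6
    {𝒳 : Type*} [Fintype 𝒳]
    (P0 P1 : 𝒳 → ℝ)
    (hP0pos : ∀ x, 0 < P0 x) (hP0sum : ∑ x, P0 x = 1)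
    (hP1pos : ∀ x, 0 < P1 x) (hP1sum : ∑ x, P1 x = 1)
    (W : 𝒳 → Bool → ℝ)
    (hWnn : ∀ x y, 0 ≤ W x y) (hWsum : ∀ x, W x false + W x true = 1)
    (Q0 Q1 : Bool → ℝ)
    (hQ0 : ∀ y, Q0 y = ∑ x, P0 x * W x y) (hQ1 : ∀ y, Q1 y = ∑ x, P1 x * W x y)
    (hQ0pos : ∀ y, 0 < Q0 y) (hQ1pos : ∀ y, 0 < Q1 y)
    (l1 l2 l3 l4 : ℝ)
    (hl1 : 0 ≤ l1) (hl2 : l2 = 0) (hl3 : 0 ≤ l3) (hl4 : 0 ≤ l4)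
    (hp1 : Q0 true < 1)
    (gm : Bool → ℝ)
    (hgmf : gm false = Real.sqrt (Q0 true / (1 - Q0 true)))
    (hgmt : gm true = -Real.sqrt ((1 - Q0 true) / Q0 true))
    (ρm : ℝ)
    (hρm : ρm = Real.sqrt (∑ x, P0 x * (gm false * W x false + gm true * W x true) ^ 2))
    (hρmpos : 0 < ρm) :
    IsLeast
      {D : ℝ | ∃ f : 𝒳 → ℝ,
        (∑ x, P0 x * f x = 0) ∧ (∑ x, P0 x * f x ^ 2 = 1) ∧
        Tendsto
          (fun ε : ℝ =>
            (Lobj P0 P1 W Q0 Q1 l1 l2 l3 l4 f ε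
              - Lobj P0 P1 W Q0 Q1 l1 l2 l3 l4 f 0) / ε)
          (nhdsWithin 0 (Set.Ioi 0)) (nhds D)}
      (-(l4 * ρm *
        Real.sqrt (∑ y, Q0 y *
          (Real.log (Q0 y / Q1 y) - ∑ y', Q0 y' * Real.log (Q0 y' / Q1 y')) ^ 2))) := by
  subst hl2
  -- basic positivity facts
  have hp0 : (0:ℝ) < Q0 true := hQ0pos true
  have hq : Q0 false = 1 - Q0 true := by
    have hs : Q0 false + Q0 true = 1 := by
      rw [hQ0 false, hQ0 true, ← Finset.sum_add_distrib, ← hP0sum]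
      exact Finset.sum_congr rfl fun x _ => by rw [← mul_add, hWsum x, mul_one]
    linarith
  have hq0 : (0:ℝ) < 1 - Q0 true := hq ▸ hQ0pos false
  -- abbreviations (as plain haves)
  have hSnn : 0 ≤ ∑ x, P0 x * (W x true - Q0 true)^2 :=
    Finset.sum_nonneg fun x _ => mul_nonneg (hP0pos x).le (sq_nonneg _)
  -- gm facts
  have hg0sq : gm false ^ 2 = Q0 true / (1 - Q0 true) := by
    rw [hgmf]; exact Real.sq_sqrt (by positivity)
  have hg1sq : gm true ^ 2 = (1 - Q0 true) / Q0 true := by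
    rw [hgmt, neg_pow, Even.neg_one_pow (by norm_num), one_mul]
    exact Real.sq_sqrt (by positivity)
  have hg01 : gm false * gm true = -1 := by
    rw [hgmf, hgmt, mul_neg, ← Real.sqrt_mul (by positivity)]
    rw [show Q0 true / (1 - Q0 true) * ((1 - Q0 true) / Q0 true) = 1 by field_simp]
    rw [Real.sqrt_one]
  have hpt : ∀ x, (gm false * W x false + gm true * W x true)^2
      = (W x true - Q0 true)^2 / (Q0 true * (1 - Q0 true)) := by
    intro x
    have hw : W x false = 1 - W x true := by linarith [hWsum x]
    have h0 : gm false ^ 2 * (1 - Q0 true) = Q0 true := by rw [hg0sq]; field_simp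
    have h1 : gm true ^ 2 * Q0 true = 1 - Q0 true := by rw [hg1sq]; field_simp
    rw [hw]
    field_simp
    linear_combination (Q0 true * (1 - W x true)^2) * h0
      + ((1 - Q0 true) * (W x true)^2) * h1
      + (2 * (W x true) * (1 - W x true) * Q0 true * (1 - Q0 true)) * hg01
  -- relate ρm to N = sqrt S
  have hρmS : ρm = Real.sqrt (∑ x, P0 x * (W x true - Q0 true)^2)
      / Real.sqrt (Q0 true * (1 - Q0 true)) := by
    rw [hρm]
    simp only [hpt]
    rw [show (∑ x, P0 x * ((W x true - Q0 true)^2 / (Q0 true * (1 - Q0 true))))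
        = (∑ x, P0 x * (W x true - Q0 true)^2) / (Q0 true * (1 - Q0 true)) by
      rw [Finset.sum_div]; exact Finset.sum_congr rfl fun x _ => (mul_div_assoc _ _ _).symm]
    exact Real.sqrt_div hSnn _
  have hcpos : 0 < Real.sqrt (Q0 true * (1 - Q0 true)) := Real.sqrt_pos.mpr (by positivity)
  have hNeq : Real.sqrt (∑ x, P0 x * (W x true - Q0 true)^2)
      = ρm * Real.sqrt (Q0 true * (1 - Q0 true)) := by
    rw [hρmS]; field_simp
  have hNpos : 0 < Real.sqrt (∑ x, P0 x * (W x true - Q0 true)^2) := by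
    rw [hNeq]; positivity
  have hSpos : 0 < ∑ x, P0 x * (W x true - Q0 true)^2 := by
    rcases lt_or_eq_of_le hSnn with h | h
    · exact h
    · exfalso; rw [← h, Real.sqrt_zero] at hNpos; exact lt_irrefl _ hNpos
  have hNsq : Real.sqrt (∑ x, P0 x * (W x true - Q0 true)^2) ^ 2
      = ∑ x, P0 x * (W x true - Q0 true)^2 := Real.sq_sqrt hSnn
  -- variance computation
  have hVsum : (∑ y, Q0 y *
        (Real.log (Q0 y / Q1 y) - ∑ y', Q0 y' * Real.log (Q0 y' / Q1 y')) ^ 2)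
      = (Q0 true * (1 - Q0 true)) *
        (Real.log (Q0 true / Q1 true) - Real.log (Q0 false / Q1 false))^2 := by
    simp only [Fintype.sum_bool]
    rw [show Q0 false = 1 - Q0 true from hq]
    ring
  have htargetEq : -(l4 * ρm *
        Real.sqrt (∑ y, Q0 y *
          (Real.log (Q0 y / Q1 y) - ∑ y', Q0 y' * Real.log (Q0 y' / Q1 y')) ^ 2))
      = -(l4 * Real.sqrt (∑ x, P0 x * (W x true - Q0 true)^2)
          * |Real.log (Q0 true / Q1 true) - Real.log (Q0 false / Q1 false)|) := by
    rw [hVsum, Real.sqrt_mul (by positivity), Real.sqrt_sq_eq_abs, hNeq]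
    ring
  -- key: for every feasible f the difference quotient tends to the directional derivative
  have key : ∀ f : 𝒳 → ℝ, (∑ x, P0 x * f x = 0) →
      Tendsto
        (fun ε : ℝ =>
          (Lobj P0 P1 W Q0 Q1 l1 0 l3 l4 f ε - Lobj P0 P1 W Q0 Q1 l1 0 l3 l4 f 0) / ε)
        (nhdsWithin 0 (Set.Ioi 0))
        (nhds (l4 * (∑ x, P0 x * f x * (W x true - Q0 true)) *
          (Real.log (Q0 true / Q1 true) - Real.log (Q0 false / Q1 false)))) := by
    intro f hmean
    have hderiv := derivLobj P0 P1 W Q0 Q1 hP0pos hQ0 hQ0pos hQ1pos l1 l3 l4 f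
    have hval : (l1 * (∑ x, (P0 x * f x * Real.log (P0 x / P0 x) + P0 x * f x))
        + (l3 * (∑ y, ((∑ x, P0 x * f x * W x y) * Real.log (Q0 y / Q0 y)
              + (∑ x, P0 x * f x * W x y)))
          + l4 * (∑ y, ((∑ x, P0 x * f x * W x y) * Real.log (Q0 y / Q1 y)
              + (∑ x, P0 x * f x * W x y)))))
        = l4 * (∑ x, P0 x * f x * (W x true - Q0 true)) *
          (Real.log (Q0 true / Q1 true) - Real.log (Q0 false / Q1 false)) := by
      have e1 : (∑ x, (P0 x * f x * Real.log (P0 x / P0 x) + P0 x * f x)) = 0 := by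
        rw [Finset.sum_congr rfl (fun x _ => by
          rw [div_self (hP0pos x).ne', Real.log_one, mul_zero, zero_add] :
            ∀ x ∈ Finset.univ, (P0 x * f x * Real.log (P0 x / P0 x) + P0 x * f x) = P0 x * f x)]
        exact hmean
      have hT : (∑ x, P0 x * f x * W x false) = -(∑ x, P0 x * f x * W x true) := by
        have h2 : (∑ x, (P0 x * f x * W x false + P0 x * f x * W x true)) = 0 := by
          rw [Finset.sum_congr rfl (fun x _ => by
            rw [← mul_add, hWsum x, mul_one] :
              ∀ x ∈ Finset.univ,
                (P0 x * f x * W x false + P0 x * f x * W x true) = P0 x * f x)]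
          exact hmean
        rw [Finset.sum_add_distrib] at h2
        linarith
      have hTt : (∑ x, P0 x * f x * W x true)
          = ∑ x, P0 x * f x * (W x true - Q0 true) := by
        have h3 : (∑ x, P0 x * f x * (W x true - Q0 true))
            = (∑ x, P0 x * f x * W x true) - Q0 true * (∑ x, P0 x * f x) := by
          rw [Finset.mul_sum, ← Finset.sum_sub_distrib]
          exact Finset.sum_congr rfl fun x _ => by ring
        rw [h3, hmean]; ring
      have hQQ : ∀ y, Real.log (Q0 y / Q0 y) = 0 := fun y => by
        rw [div_self (hQ0pos y).ne', Real.log_one]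
      simp only [Fintype.sum_bool, hQQ, mul_zero, zero_add]
      rw [e1, hT, hTt]
      ring
    rw [hval] at hderiv
    have h1 := hasDerivAt_iff_tendsto_slope.mp hderiv
    have h2 := h1.mono_left (nhdsWithin_mono (0:ℝ)
      (fun x hx => Set.mem_compl_singleton_iff.mpr (ne_of_gt hx)))
    exact h2.congr fun ε => by rw [slope_def_field, sub_zero]
  constructor
  · -- membership: the optimal direction
    set σ : ℝ := if 0 ≤ Real.log (Q0 true / Q1 true) - Real.log (Q0 false / Q1 false)
      then 1 else -1 with hσdef
    have hσ2 : σ ^ 2 = 1 := by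
      rw [hσdef]; split <;> norm_num
    have hσd : σ * (Real.log (Q0 true / Q1 true) - Real.log (Q0 false / Q1 false))
        = |Real.log (Q0 true / Q1 true) - Real.log (Q0 false / Q1 false)| := by
      rw [hσdef]
      split
      · rw [one_mul, abs_of_nonneg (by assumption)]
      · rw [abs_of_neg (by linarith [not_le.mp (by assumption)]), neg_one_mul]
    set N : ℝ := Real.sqrt (∑ x, P0 x * (W x true - Q0 true)^2) with hNdef
    refine ⟨fun x => σ * ((Q0 true - W x true) / N), ?_, ?_, ?_⟩
    · -- mean zero
      have h4 : (∑ x, P0 x * (σ * ((Q0 true - W x true) / N)))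
          = (σ / N) * ∑ x, P0 x * (Q0 true - W x true) := by
        rw [Finset.mul_sum]
        exact Finset.sum_congr rfl fun x _ => by ring
      have h5 : (∑ x, P0 x * (Q0 true - W x true)) = 0 := by
        have h6 : (∑ x, P0 x * (Q0 true - W x true))
            = (∑ x, P0 x) * Q0 true - ∑ x, P0 x * W x true := by
          rw [Finset.sum_mul, ← Finset.sum_sub_distrib]
          exact Finset.sum_congr rfl fun x _ => by ring
        rw [h6, hP0sum, ← hQ0 true]; ring
      rw [h4, h5, mul_zero]
    · -- norm one
      have h4 : (∑ x, P0 x * (σ * ((Q0 true - W x true) / N)) ^ 2)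
          = (1 / N^2) * ∑ x, P0 x * (W x true - Q0 true)^2 := by
        rw [Finset.mul_sum]
        refine Finset.sum_congr rfl fun x _ => ?_
        have : P0 x * (σ * ((Q0 true - W x true) / N)) ^ 2
            = σ^2 * (P0 x * (W x true - Q0 true)^2 / N^2) := by ring
        rw [this, hσ2]; ring
      rw [h4, hNsq]
      field_simp
    · -- the limit value matches
      have hfmean : (∑ x, P0 x * (σ * ((Q0 true - W x true) / N))) = 0 := by
        have h4 : (∑ x, P0 x * (σ * ((Q0 true - W x true) / N)))
            = (σ / N) * ∑ x, P0 x * (Q0 true - W x true) := by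
          rw [Finset.mul_sum]
          exact Finset.sum_congr rfl fun x _ => by ring
        have h5 : (∑ x, P0 x * (Q0 true - W x true)) = 0 := by
          have h6 : (∑ x, P0 x * (Q0 true - W x true))
              = (∑ x, P0 x) * Q0 true - ∑ x, P0 x * W x true := by
            rw [Finset.sum_mul, ← Finset.sum_sub_distrib]
            exact Finset.sum_congr rfl fun x _ => by ring
          rw [h6, hP0sum, ← hQ0 true]; ring
        rw [h4, h5, mul_zero]
      have hlim := key _ hfmean
      have hI : (∑ x, P0 x * (σ * ((Q0 true - W x true) / N)) * (W x true - Q0 true))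
          = -(σ * N) := by
        have h7 : ∀ x : 𝒳, P0 x * (σ * ((Q0 true - W x true) / N)) * (W x true - Q0 true)
            = -((σ / N) * (P0 x * (W x true - Q0 true)^2)) := fun x => by ring
        rw [Finset.sum_congr rfl fun x _ => h7 x, Finset.sum_neg_distrib,
          ← Finset.mul_sum, ← hNsq]
        field_simp
      rw [hI] at hlim
      have hfinal : -(l4 * ρm *
            Real.sqrt (∑ y, Q0 y *
              (Real.log (Q0 y / Q1 y) - ∑ y', Q0 y' * Real.log (Q0 y' / Q1 y')) ^ 2))
          = l4 * -(σ * N) *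
            (Real.log (Q0 true / Q1 true) - Real.log (Q0 false / Q1 false)) := by
        rw [htargetEq]
        linear_combination (l4 * N) * hσd
      rw [hfinal]
      exact hlim
  · -- lower bound
    rintro D ⟨f, hmean, hsq, htend⟩
    have hlim := key f hmean
    have hDeq : D = l4 * (∑ x, P0 x * f x * (W x true - Q0 true)) *
        (Real.log (Q0 true / Q1 true) - Real.log (Q0 false / Q1 false)) :=
      tendsto_nhds_unique htend hlim
    -- Cauchy–Schwarz
    have hcs : (∑ x, P0 x * f x * (W x true - Q0 true))^2
        ≤ ∑ x, P0 x * (W x true - Q0 true)^2 := by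
      have h := Finset.sum_mul_sq_le_sq_mul_sq Finset.univ
        (fun x => Real.sqrt (P0 x) * f x)
        (fun x => Real.sqrt (P0 x) * (W x true - Q0 true))
      have e1 : ∀ x : 𝒳, (Real.sqrt (P0 x) * f x) * (Real.sqrt (P0 x) * (W x true - Q0 true))
          = P0 x * f x * (W x true - Q0 true) := fun x => by
        rw [show Real.sqrt (P0 x) * f x * (Real.sqrt (P0 x) * (W x true - Q0 true))
            = (Real.sqrt (P0 x) * Real.sqrt (P0 x)) * (f x * (W x true - Q0 true)) by ring,
          Real.mul_self_sqrt (hP0pos x).le]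
        ring
      have e2 : ∀ x : 𝒳, (Real.sqrt (P0 x) * f x)^2 = P0 x * f x ^ 2 := fun x => by
        rw [mul_pow, Real.sq_sqrt (hP0pos x).le]
      have e3 : ∀ x : 𝒳, (Real.sqrt (P0 x) * (W x true - Q0 true))^2
          = P0 x * (W x true - Q0 true)^2 := fun x => by
        rw [mul_pow, Real.sq_sqrt (hP0pos x).le]
      simp only [e1, e2, e3] at h
      rw [hsq, one_mul] at h
      exact h
    have habs : |∑ x, P0 x * f x * (W x true - Q0 true)|
        ≤ Real.sqrt (∑ x, P0 x * (W x true - Q0 true)^2) := by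
      have h := Real.sqrt_le_sqrt hcs
      rwa [Real.sqrt_sq_eq_abs] at h
    rw [hDeq, htargetEq]
    have h1 : -(Real.sqrt (∑ x, P0 x * (W x true - Q0 true)^2)
          * |Real.log (Q0 true / Q1 true) - Real.log (Q0 false / Q1 false)|)
        ≤ (∑ x, P0 x * f x * (W x true - Q0 true)) *
          (Real.log (Q0 true / Q1 true) - Real.log (Q0 false / Q1 false)) := by
      have h2 : |(∑ x, P0 x * f x * (W x true - Q0 true)) *
          (Real.log (Q0 true / Q1 true) - Real.log (Q0 false / Q1 false))|
          ≤ Real.sqrt (∑ x, P0 x * (W x true - Q0 true)^2)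
            * |Real.log (Q0 true / Q1 true) - Real.log (Q0 false / Q1 false)| := by
        rw [abs_mul]
        exact mul_le_mul_of_nonneg_right habs (abs_nonneg _)
      linarith [neg_abs_le ((∑ x, P0 x * f x * (W x true - Q0 true)) *
        (Real.log (Q0 true / Q1 true) - Real.log (Q0 false / Q1 false)))]
    nlinarith [mul_le_mul_of_nonneg_left h1 hl4]
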